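/- In the modal logic S5 (equivalently, over Kripke frames whose accessibility relation is an equivalence relation), formulas with at most s variables are valid in all S5 frames if and only if they are valid in the single cluster frame C_{2^s} on 2^s points with total accessibility. Consequently, if k ≥ 2^s, then a formula in at most s variables is valid on C_k if and only if it is valid on every cluster C_m with m ≥ 1. -/

import Mathlib

/-- Modal formulas in negation normal form. -/
inductive Fm where
  | var : ℕ → Fm
  | nvar : ℕ → Fm
  | bot : Fm
  | top : Fm
  | and : Fm → Fm → Fm
  | or : Fm → Fm → Fm
  | dia : Fm → Fm
  | box : Fm → Fm

/-- Variables occurring in a formula. -/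
def Fm.vars : Fm → Finset ℕ
  | .var n => {n}
  | .nvar n => {n}
  | .bot => ∅
  | .top => ∅
  | .and a b => a.vars ∪ b.vars
  | .or a b => a.vars ∪ b.vars
  | .dia a => a.vars
  | .box a => a.vars

/-- Kripke semantics for formulas in negation normal form. -/
def ksatN {W : Type*} (R : W → W → Prop) (ϑ : ℕ → Set W) : Fm → W → Prop
  | .var n, w => w ∈ ϑ n
  | .nvar n, w => w ∉ ϑ n
  | .bot, _ => False
  | .top, _ => True
  | .and a b, w => ksatN R ϑ a w ∧ ksatN R ϑ b w
  | .or a b, w => ksatN R ϑ a w ∨ ksatN R ϑ b w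
  | .dia a, w => ∃ v, R w v ∧ ksatN R ϑ a v
  | .box a, w => ∀ v, R w v → ksatN R ϑ a v

/-- Validity on a Kripke frame. -/
def kvalid {W : Type*} (R : W → W → Prop) (φ : Fm) : Prop :=
  ∀ (ϑ : ℕ → Set W) (w : W), ksatN R ϑ φ w

/-- The total relation on `Fin k` (the cluster `C_k`). -/
def totR (k : ℕ) : Fin k → Fin k → Prop := fun _ _ => True

-- Lemma B: in a cluster, points with the same type satisfy the same formulas
lemma sameType {W : Type*} (ϑ : ℕ → Set W) (a : Fm) (w u : W)
    (h : ∀ n ∈ a.vars, (w ∈ ϑ n ↔ u ∈ ϑ n)) :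
    ksatN (fun _ _ => True) ϑ a w ↔ ksatN (fun _ _ => True) ϑ a u := by
  induction a with
  | var n => exact h n (by simp [Fm.vars])
  | nvar n => exact not_congr (h n (by simp [Fm.vars]))
  | bot => exact Iff.rfl
  | top => exact Iff.rfl
  | and a b iha ihb =>
      exact and_congr (iha fun n hn => h n (by simp [Fm.vars, hn]))
        (ihb fun n hn => h n (by simp [Fm.vars, hn]))
  | or a b iha ihb =>
      exact or_congr (iha fun n hn => h n (by simp [Fm.vars, hn]))
        (ihb fun n hn => h n (by simp [Fm.vars, hn]))
  | dia a ih => exact Iff.rfl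
  | box a ih => exact Iff.rfl

-- Lemma C: transfer between clusters via a type-covering map
lemma transfer {W W' : Type*} (ϑ : ℕ → Set W) (g : W' → W) (V : Finset ℕ)
    (hcov : ∀ v : W, ∃ i : W', ∀ n ∈ V, (g i ∈ ϑ n ↔ v ∈ ϑ n)) :
    ∀ a : Fm, a.vars ⊆ V → ∀ i : W',
      (ksatN (fun _ _ => True) (fun n => g ⁻¹' ϑ n) a i ↔
        ksatN (fun _ _ => True) ϑ a (g i)) := by
  intro a
  induction a with
  | var n => exact fun _ _ => Iff.rfl
  | nvar n => exact fun _ _ => Iff.rfl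
  | bot => exact fun _ _ => Iff.rfl
  | top => exact fun _ _ => Iff.rfl
  | and a b iha ihb =>
      intro hsub i
      exact and_congr (iha (fun n hn => hsub (by simp [Fm.vars, hn])) i)
        (ihb (fun n hn => hsub (by simp [Fm.vars, hn])) i)
  | or a b iha ihb =>
      intro hsub i
      exact or_congr (iha (fun n hn => hsub (by simp [Fm.vars, hn])) i)
        (ihb (fun n hn => hsub (by simp [Fm.vars, hn])) i)
  | dia a ih =>
      intro hsub i
      constructor
      · rintro ⟨j, -, hj⟩
        exact ⟨g j, trivial, (ih hsub j).mp hj⟩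
      · rintro ⟨v, -, hv⟩
        obtain ⟨i', hi'⟩ := hcov v
        refine ⟨i', trivial, (ih hsub i').mpr ?_⟩
        exact (sameType ϑ a (g i') v (fun n hn => hi' n (hsub hn))).mpr hv
  | box a ih =>
      intro hsub i
      constructor
      · intro hall v _
        obtain ⟨i', hi'⟩ := hcov v
        exact (sameType ϑ a (g i') v (fun n hn => hi' n (hsub hn))).mp
          ((ih hsub i').mp (hall i' trivial))
      · intro hall j _
        exact (ih hsub j).mpr (hall (g j) trivial)

-- Lemma A: restriction to the cluster of a point in an equivalence frame
lemma restrictCluster {W : Type*} {R : W → W → Prop} (hR : Equivalence R)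
    (ϑ : ℕ → Set W) (w : W) (a : Fm) :
    ∀ v : {v // R w v},
      (ksatN R ϑ a v.1 ↔
        ksatN (fun _ _ => True) (fun n => Subtype.val ⁻¹' ϑ n) a v) := by
  induction a with
  | var n => exact fun _ => Iff.rfl
  | nvar n => exact fun _ => Iff.rfl
  | bot => exact fun _ => Iff.rfl
  | top => exact fun _ => Iff.rfl
  | and a b iha ihb => exact fun v => and_congr (iha v) (ihb v)
  | or a b iha ihb => exact fun v => or_congr (iha v) (ihb v)
  | dia a ih =>
      intro v
      constructor
      · rintro ⟨u, hu, hsat⟩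
        exact ⟨⟨u, hR.trans v.2 hu⟩, trivial, (ih _).mp hsat⟩
      · rintro ⟨u, -, hsat⟩
        exact ⟨u.1, hR.trans (hR.symm v.2) u.2, (ih u).mpr hsat⟩
  | box a ih =>
      intro v
      constructor
      · intro hall u _
        exact (ih u).mp (hall u.1 (hR.trans (hR.symm v.2) u.2))
      · intro hall u hu
        exact (ih ⟨u, hR.trans v.2 hu⟩).mpr (hall ⟨u, hR.trans v.2 hu⟩ trivial)

open Classical in
lemma clusterToEquiv (s : ℕ) (φ : Fm) (hφ : φ.vars ⊆ Finset.range s)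
    (hval : kvalid (totR (2 ^ s)) φ) {W : Type*} {R : W → W → Prop}
    (hR : Equivalence R) : kvalid R φ := by
  intro ϑ w
  let W₀ := {v // R w v}
  let ϑ₀ : ℕ → Set W₀ := fun n => Subtype.val ⁻¹' ϑ n
  let e : W₀ → Fin (2 ^ s) :=
    fun v => finFunctionFinEquiv
      ((fun j : Fin s => if v ∈ ϑ₀ j then (1 : Fin 2) else 0) : Fin s → Fin 2)
  let g : Fin (2 ^ s) → W₀ :=
    fun i => if h : ∃ v : W₀, e v = i then h.choose else ⟨w, hR.refl w⟩
  have hcov : ∀ v : W₀, ∃ i : Fin (2 ^ s), ∀ n ∈ φ.vars, (g i ∈ ϑ₀ n ↔ v ∈ ϑ₀ n) := by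
    intro v
    refine ⟨e v, fun n hn => ?_⟩
    have hex : ∃ v' : W₀, e v' = e v := ⟨v, rfl⟩
    have hg : g (e v) = hex.choose := dif_pos hex
    have hee : e hex.choose = e v := hex.choose_spec
    have hns : n < s := Finset.mem_range.mp (hφ hn)
    have hfun := congrFun (finFunctionFinEquiv.injective hee) ⟨n, hns⟩
    rw [hg]
    by_cases h1 : hex.choose ∈ ϑ₀ n <;> by_cases h2 : v ∈ ϑ₀ n <;> simp_all
  obtain ⟨i, hi⟩ := hcov ⟨w, hR.refl w⟩
  have h1 : ksatN (fun _ _ => True) (fun n => g ⁻¹' ϑ₀ n) φ i :=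
    hval (fun n => g ⁻¹' ϑ₀ n) i
  have h2 := (transfer ϑ₀ g φ.vars hcov φ subset_rfl i).mp h1
  have h3 := (sameType ϑ₀ φ (g i) ⟨w, hR.refl w⟩ hi).mp h2
  exact (restrictCluster hR ϑ w φ ⟨w, hR.refl w⟩).mpr h3


/-- A formula with at most `s` variables is valid in all S5 frames (frames whose
accessibility relation is an equivalence relation) iff it is valid in the cluster
`C_{2^s}`; consequently, for `k ≥ 2^s`, validity on `C_k` coincides with validity
on every cluster `C_m`, `m ≥ 1`. -/
theorem s5_s_variable_fragment (s : ℕ) (φ : Fm) (hφ : φ.vars ⊆ Finset.range s) :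
    ((∀ (W : Type) (R : W → W → Prop), Equivalence R → kvalid R φ) ↔
      kvalid (totR (2 ^ s)) φ) ∧
    (∀ k, 2 ^ s ≤ k →
      (kvalid (totR k) φ ↔ ∀ m, 1 ≤ m → kvalid (totR m) φ)) := by
  have equivTot : ∀ m, Equivalence (totR m) :=
    fun m => ⟨fun _ => trivial, fun _ => trivial, fun _ _ => trivial⟩
  constructor
  · constructor
    · intro h; exact h (Fin (2 ^ s)) (totR (2 ^ s)) (equivTot _)
    · intro h W R hR; exact clusterToEquiv s φ hφ h hR
  · intro k hk
    constructor
    · intro hvk m _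
      have h2 : kvalid (totR (2 ^ s)) φ := by
        intro ϑ v
        have hpos : 0 < 2 ^ s := Nat.pow_pos (by norm_num)
        let g : Fin k → Fin (2 ^ s) :=
          fun i => if h : i.1 < 2 ^ s then ⟨i.1, h⟩ else ⟨0, hpos⟩
        have hcov : ∀ v' : Fin (2 ^ s), ∃ i : Fin k,
            ∀ n ∈ φ.vars, (g i ∈ ϑ n ↔ v' ∈ ϑ n) := by
          intro v'
          refine ⟨⟨v'.1, lt_of_lt_of_le v'.2 hk⟩, fun n hn => ?_⟩
          have hgv : g ⟨v'.1, lt_of_lt_of_le v'.2 hk⟩ = v' := by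
            simp [g, v'.2]
          rw [hgv]
        obtain ⟨i, hi⟩ := hcov v
        have h1 : ksatN (fun _ _ => True) (fun n => g ⁻¹' ϑ n) φ i :=
          hvk (fun n => g ⁻¹' ϑ n) i
        have h2 := (transfer ϑ g φ.vars hcov φ subset_rfl i).mp h1
        exact (sameType ϑ φ (g i) v hi).mp h2
      exact clusterToEquiv s φ hφ h2 (equivTot m)
    · intro h
      exact h k (le_trans Nat.one_le_two_pow hk)
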